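/- Solution structure for KL-regularized capped simplex maximization: for q ∈ ℝ^K sorted with [i] denoting the index of the i-th largest entry, λ > 0, and k ∈ {1,…,K}, define for a ∈ {1,…,K} the vector p(a) by p(a)_{[i]} = 1/k for i < a and p(a)_{[i]} = exp(q_{[i]}/λ − 1) · min(1/K, (1 − (a−1)/k)/∑_{j=a}^K exp(q_{[j]}/λ − 1)) for i ≥ a. Then the maximizer of ∑_i p_i q_i − λ ∑_i p_i log(K p_i) over {p : p ≥ 0, ∑_i p_i ≤ 1, p_i ≤ 1/k ∀i} is p(a*) where a* is the smallest a with p(a)_{[a]} ≤ 1/k. -/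

import Mathlib

private lemma tangent_ineq (Kr lam qi s t : ℝ) (hK : 0 < Kr) (hlam : 0 < lam)
    (hs : 0 < s) (ht : 0 ≤ t) :
    t * qi - lam * (t * Real.log (Kr * t)) ≤
      s * qi - lam * (s * Real.log (Kr * s)) +
        (qi - lam * (Real.log (Kr * s) + 1)) * (t - s) := by
  rcases ht.eq_or_lt with h | h
  · rw [← h]
    have : (0:ℝ) * qi - lam * (0 * Real.log (Kr * 0)) = 0 := by ring
    rw [this]
    nlinarith [mul_pos hlam hs]
  · have h1 : Real.log (s / t) ≤ s / t - 1 := Real.log_le_sub_one_of_pos (div_pos hs h)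
    rw [Real.log_div hs.ne' h.ne'] at h1
    have hts : t * (s / t) = s := by field_simp
    have key : t - s ≤ t * (Real.log t - Real.log s) := by
      have h2 := mul_le_mul_of_nonneg_left h1 h.le
      rw [mul_sub t (s/t) 1, hts] at h2
      nlinarith
    have e1 : Real.log (Kr * t) = Real.log Kr + Real.log t := Real.log_mul hK.ne' h.ne'
    have e2 : Real.log (Kr * s) = Real.log Kr + Real.log s := Real.log_mul hK.ne' hs.ne'
    rw [e1, e2]
    nlinarith [mul_le_mul_of_nonneg_left key hlam.le]

private noncomputable def Ee {K : ℕ} (q : Fin K → ℝ) (lam : ℝ) (σ : Equiv.Perm (Fin K))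
    (i : Fin K) : ℝ := Real.exp (q (σ i) / lam - 1)

private noncomputable def Ss {K : ℕ} (q : Fin K → ℝ) (lam : ℝ) (σ : Equiv.Perm (Fin K))
    (b : ℕ) : ℝ :=
  ∑ j ∈ Finset.univ.filter (fun j : Fin K => b ≤ (j : ℕ)), Ee q lam σ j

private noncomputable def Mm {K : ℕ} (k : ℕ) (q : Fin K → ℝ) (lam : ℝ)
    (σ : Equiv.Perm (Fin K)) (b : ℕ) : ℝ :=
  min (1 / (K : ℝ)) ((1 - (b : ℝ) / (k : ℝ)) / Ss q lam σ b)

/-- Solution structure of the KL-regularized maximization over the capped simplex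
`Ω(k) = {p : p ≥ 0, ∑ p ≤ 1, p_i ≤ 1/k}`: with coordinates sorted decreasingly via a
permutation σ, the candidate `p(a)` caps the first `a` sorted coordinates at `1/k` and
water-fills the rest; the optimum is `p(a*)` for the smallest `a*` with
`p(a*)_{[a*]} ≤ 1/k` (indices 0-based). -/
theorem ldr_k_kl_solution_structure (K k : ℕ) (hk : 1 ≤ k) (hkK : k ≤ K)
    (q : Fin K → ℝ) (lam : ℝ) (hlam : 0 < lam)
    (σ : Equiv.Perm (Fin K)) (hsort : ∀ i j : Fin K, i ≤ j → q (σ j) ≤ q (σ i))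
    (P : Fin K → (Fin K → ℝ))
    (hP : ∀ a i : Fin K, P a (σ i) =
      if (i : ℕ) < (a : ℕ) then 1 / (k : ℝ)
      else Real.exp (q (σ i) / lam - 1) *
        min (1 / (K : ℝ))
          ((1 - (a : ℕ) / (k : ℝ)) /
            ∑ j ∈ Finset.univ.filter (fun j : Fin K => (a : ℕ) ≤ (j : ℕ)),
              Real.exp (q (σ j) / lam - 1)))
    (astar : Fin K)
    (hfeas : P astar (σ astar) ≤ 1 / (k : ℝ))
    (hsmallest : ∀ b : Fin K, (b : ℕ) < (astar : ℕ) → ¬ (P b (σ b) ≤ 1 / (k : ℝ))) :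
    (∀ i, 0 ≤ P astar i) ∧ (∑ i : Fin K, P astar i ≤ 1) ∧
      (∀ i, P astar i ≤ 1 / (k : ℝ)) ∧
    (∀ p : Fin K → ℝ, (∀ i, 0 ≤ p i) → (∑ i : Fin K, p i ≤ 1) →
      (∀ i, p i ≤ 1 / (k : ℝ)) →
      (∑ i : Fin K, p i * q i) - lam * ∑ i : Fin K, p i * Real.log ((K : ℝ) * p i)
        ≤ (∑ i : Fin K, P astar i * q i)
            - lam * ∑ i : Fin K, P astar i * Real.log ((K : ℝ) * P astar i)) := by
  have hK1 : 1 ≤ K := le_trans hk hkK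
  have hKr : (0:ℝ) < K := by exact_mod_cast hK1
  have hkr : (0:ℝ) < k := by exact_mod_cast hk
  set A : ℕ := (astar : ℕ) with hA
  -- clean form of hP
  have hPb : ∀ b i : Fin K, P b (σ i) =
      if (i : ℕ) < (b : ℕ) then 1 / (k : ℝ) else Ee q lam σ i * Mm k q lam σ (b : ℕ) := by
    intro b i; rw [hP b i]; rfl
  have hPa : ∀ i : Fin K, P astar (σ i) =
      if (i : ℕ) < A then 1 / (k : ℝ) else Ee q lam σ i * Mm k q lam σ A := hPb astar
  have hE_pos : ∀ i : Fin K, 0 < Ee q lam σ i := fun i => Real.exp_pos _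
  have hS_pos : ∀ b : ℕ, b ≤ A → 0 < Ss q lam σ b := by
    intro b hb
    apply Finset.sum_pos (fun j _ => hE_pos j)
    exact ⟨astar, by simpa using hb⟩
  -- hfeas, hsmallest in clean form
  have hfeas' : Ee q lam σ astar * Mm k q lam σ A ≤ 1 / (k : ℝ) := by
    rw [hPa astar, if_neg (lt_irrefl A)] at hfeas; exact hfeas
  have hsmall' : ∀ b : Fin K, (b : ℕ) < A →
      1 / (k : ℝ) < Ee q lam σ b * Mm k q lam σ (b : ℕ) := by
    intro b hb
    have h := hsmallest b hb
    rw [hPb b b, if_neg (lt_irrefl _)] at h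
    exact lt_of_not_ge h
  -- A < k
  have hAk : A < k := by
    by_contra hcon
    push_neg at hcon
    have hbK : k - 1 < K := by omega
    have h2 : 1 / (k:ℝ) < Ee q lam σ ⟨k - 1, hbK⟩ * Mm k q lam σ (k - 1) :=
      hsmall' ⟨k - 1, hbK⟩ (by show k - 1 < A; omega)
    have hSpos : 0 < Ss q lam σ (k - 1) := hS_pos _ (by omega)
    have hmem : (⟨k - 1, hbK⟩ : Fin K) ∈
        Finset.univ.filter (fun j : Fin K => k - 1 ≤ (j : ℕ)) :=
      Finset.mem_filter.mpr ⟨Finset.mem_univ _, le_rfl⟩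
    have hle : Ee q lam σ ⟨k - 1, hbK⟩ ≤ Ss q lam σ (k - 1) :=
      Finset.single_le_sum (fun j _ => (hE_pos j).le) hmem
    have hnum : (1 : ℝ) - ((k - 1 : ℕ) : ℝ) / k = 1 / k := by
      rw [Nat.cast_sub hk]; field_simp; simp
    have hmle : Mm k q lam σ (k - 1) ≤ (1 / (k:ℝ)) / Ss q lam σ (k - 1) := by
      rw [← hnum]; exact min_le_right _ _
    have : Ee q lam σ ⟨k - 1, hbK⟩ * Mm k q lam σ (k - 1) ≤ 1 / (k:ℝ) := by
      calc Ee q lam σ ⟨k - 1, hbK⟩ * Mm k q lam σ (k - 1)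
          ≤ Ee q lam σ ⟨k - 1, hbK⟩ * ((1 / (k:ℝ)) / Ss q lam σ (k - 1)) :=
            mul_le_mul_of_nonneg_left hmle (hE_pos _).le
        _ = (1 / (k:ℝ)) * (Ee q lam σ ⟨k - 1, hbK⟩ / Ss q lam σ (k - 1)) := by ring
        _ ≤ (1 / (k:ℝ)) * 1 := by
            apply mul_le_mul_of_nonneg_left _ (by positivity)
            exact (div_le_one hSpos).mpr hle
        _ = 1 / (k:ℝ) := mul_one _
    linarith
  have hAkr : (A : ℝ) < k := by exact_mod_cast hAk
  have hnumA_pos : (0:ℝ) < 1 - (A : ℝ) / k := by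
    rw [sub_pos, div_lt_one hkr]; exact hAkr
  have hm_pos : 0 < Mm k q lam σ A :=
    lt_min (by positivity) (div_pos hnumA_pos (hS_pos A le_rfl))
  -- monotonicity of Mm up to A
  have hstep : ∀ b : ℕ, b < A → Mm k q lam σ b ≤ Mm k q lam σ (b + 1) := by
    intro b hb
    have hbK : b < K := lt_trans hb astar.isLt
    have h2 : 1 / (k:ℝ) < Ee q lam σ ⟨b, hbK⟩ * Mm k q lam σ b :=
      hsmall' ⟨b, hbK⟩ (by show b < A; omega)
    have hSb : 0 < Ss q lam σ b := hS_pos b (le_of_lt hb)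
    have hSb1 : 0 < Ss q lam σ (b + 1) := hS_pos (b + 1) hb
    have hsplit : Ss q lam σ b = Ee q lam σ ⟨b, hbK⟩ + Ss q lam σ (b + 1) := by
      unfold Ss
      have hset : Finset.univ.filter (fun j : Fin K => b ≤ (j : ℕ)) =
          insert (⟨b, hbK⟩ : Fin K)
            (Finset.univ.filter (fun j : Fin K => b + 1 ≤ (j : ℕ))) := by
        ext j
        simp only [Finset.mem_filter, Finset.mem_univ, true_and, Finset.mem_insert,
          Fin.ext_iff]
        omega
      rw [hset, Finset.sum_insert (by
        simp only [Finset.mem_filter, Finset.mem_univ, true_and]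
        omega)]
    have hmb_le : Mm k q lam σ b * Ss q lam σ b ≤ 1 - (b:ℝ)/k :=
      (le_div_iff₀ hSb).mp (min_le_right _ _)
    have e1 : Mm k q lam σ b * Ss q lam σ (b + 1) =
        Mm k q lam σ b * Ss q lam σ b - Ee q lam σ ⟨b, hbK⟩ * Mm k q lam σ b := by
      rw [hsplit]; ring
    have hdivsum : ((b:ℝ) + 1) / k = (b:ℝ)/k + 1/k := by ring
    have hkey : Mm k q lam σ b * Ss q lam σ (b + 1) ≤ 1 - ((b + 1 : ℕ):ℝ)/k := by
      push_cast
      rw [hdivsum]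
      linarith
    exact le_min (min_le_left _ _) ((le_div_iff₀ hSb1).mpr (by push_cast; push_cast at hkey; linarith))
  have hmono : ∀ b : ℕ, b ≤ A → Mm k q lam σ b ≤ Mm k q lam σ A := by
    have haux : ∀ d b : ℕ, b + d = A → Mm k q lam σ b ≤ Mm k q lam σ A := by
      intro d
      induction d with
      | zero => intro b hb'; have : b = A := by omega
                rw [this]
      | succ n ih =>
          intro b hb'
          exact le_trans (hstep b (by omega)) (ih (b + 1) (by omega))
    intro b hb; exact haux (A - b) b (by omega)
  -- strict positivity of P astar
  have hpos : ∀ i, 0 < P astar i := by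
    intro i
    have h := hPa (σ.symm i)
    rw [Equiv.apply_symm_apply] at h
    rw [h]
    split
    · positivity
    · exact mul_pos (hE_pos _) hm_pos
  -- the cap
  have hcap : ∀ i, P astar i ≤ 1 / (k : ℝ) := by
    intro i
    have h := hPa (σ.symm i)
    rw [Equiv.apply_symm_apply] at h
    rw [h]
    split
    · exact le_refl _
    · next hni =>
      have hai : astar ≤ σ.symm i := by
        rw [Fin.le_def]; omega
      have hq : q (σ (σ.symm i)) ≤ q (σ astar) := hsort astar (σ.symm i) hai
      have hEle : Ee q lam σ (σ.symm i) ≤ Ee q lam σ astar := by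
        unfold Ee
        apply Real.exp_le_exp.mpr
        have hdiv : q (σ (σ.symm i)) / lam ≤ q (σ astar) / lam := by gcongr
        linarith
      calc Ee q lam σ (σ.symm i) * Mm k q lam σ A
          ≤ Ee q lam σ astar * Mm k q lam σ A :=
            mul_le_mul_of_nonneg_right hEle hm_pos.le
        _ ≤ 1 / (k : ℝ) := hfeas'
  -- sum formula
  have hcard : (Finset.univ.filter (fun i : Fin K => (i : ℕ) < A)).card = A := by
    have h1 : Finset.univ.filter (fun i : Fin K => (i : ℕ) < A) = Finset.Iio astar := by
      ext i
      simp only [Finset.mem_filter, Finset.mem_univ, true_and, Finset.mem_Iio]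
      exact (Fin.lt_def).symm
    rw [h1, Fin.card_Iio]
  have hsum_eq : ∑ i : Fin K, P astar i =
      (A : ℝ) / k + Mm k q lam σ A * Ss q lam σ A := by
    rw [← Equiv.sum_comp σ (fun i => P astar i)]
    rw [← Finset.sum_filter_add_sum_filter_not Finset.univ (fun i : Fin K => (i : ℕ) < A)]
    congr 1
    · have hc : ∀ i ∈ Finset.univ.filter (fun i : Fin K => (i : ℕ) < A),
          P astar (σ i) = 1 / (k : ℝ) := by
        intro i hi
        rw [hPa i, if_pos (Finset.mem_filter.mp hi).2]
      rw [Finset.sum_congr rfl hc, Finset.sum_const, hcard, nsmul_eq_mul, mul_one_div]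
    · have hfe : Finset.univ.filter (fun i : Fin K => ¬ (i : ℕ) < A) =
          Finset.univ.filter (fun i : Fin K => A ≤ (i : ℕ)) := by
        ext i; simp [not_lt]
      have hc : ∀ i ∈ Finset.univ.filter (fun i : Fin K => ¬ (i : ℕ) < A),
          P astar (σ i) = Ee q lam σ i * Mm k q lam σ A := by
        intro i hi
        rw [hPa i, if_neg (Finset.mem_filter.mp hi).2]
      rw [Finset.sum_congr rfl hc, hfe, ← Finset.sum_mul]
      unfold Ss
      ring
  have hMS : Mm k q lam σ A * Ss q lam σ A ≤ 1 - (A:ℝ)/k :=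
    (le_div_iff₀ (hS_pos A le_rfl)).mp (min_le_right _ _)
  have hsum_le : ∑ i : Fin K, P astar i ≤ 1 := by
    rw [hsum_eq]; linarith
  refine ⟨fun i => (hpos i).le, hsum_le, hcap, ?_⟩
  -- optimality
  intro p hp0 hpsum hpcap
  set c : ℝ := -lam * Real.log ((K : ℝ) * Mm k q lam σ A) with hc
  have hKm_le1 : (K : ℝ) * Mm k q lam σ A ≤ 1 := by
    have := min_le_left (1 / (K : ℝ)) ((1 - (A:ℝ)/k) / Ss q lam σ A)
    have h2 : Mm k q lam σ A ≤ 1 / (K:ℝ) := this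
    rw [le_div_iff₀ hKr] at h2
    linarith
  have hc_nonneg : 0 ≤ c := by
    have hlog : Real.log ((K : ℝ) * Mm k q lam σ A) ≤ 0 :=
      Real.log_nonpos (by positivity) hKm_le1
    rw [hc]; nlinarith
  -- gradient values
  have hlogE : ∀ i : Fin K, Real.log (Ee q lam σ i) = q (σ i) / lam - 1 := by
    intro i; unfold Ee; exact Real.log_exp _
  have hg_eq : ∀ i : Fin K, A ≤ (i : ℕ) →
      q (σ i) - lam * (Real.log ((K : ℝ) * P astar (σ i)) + 1) = c := by
    intro i hi
    rw [hPa i, if_neg (not_lt.mpr hi)]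
    have hre : (K:ℝ) * (Ee q lam σ i * Mm k q lam σ A) =
        Ee q lam σ i * ((K:ℝ) * Mm k q lam σ A) := by ring
    rw [hre, Real.log_mul (hE_pos i).ne' (by positivity), hlogE i, hc]
    field_simp
    ring
  have hg_ge : ∀ i : Fin K, (i : ℕ) < A →
      c ≤ q (σ i) - lam * (Real.log ((K : ℝ) * P astar (σ i)) + 1) := by
    intro i hi
    rw [hPa i, if_pos hi]
    have h2 : 1 / (k:ℝ) < Ee q lam σ i * Mm k q lam σ A :=
      lt_of_lt_of_le (hsmall' i hi)
        (mul_le_mul_of_nonneg_left (hmono _ (le_of_lt hi)) (hE_pos i).le)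
    have h3 : Real.log (1 / (k:ℝ)) < Real.log (Ee q lam σ i * Mm k q lam σ A) :=
      Real.log_lt_log (by positivity) h2
    rw [one_div, Real.log_inv, Real.log_mul (hE_pos i).ne' hm_pos.ne', hlogE i] at h3
    have e1 : (K:ℝ) * (1 / k) = (K:ℝ) / k := by ring
    rw [e1, Real.log_div hKr.ne' hkr.ne', hc, Real.log_mul hKr.ne' hm_pos.ne']
    have h4 := mul_lt_mul_of_pos_left h3 hlam
    have h5 : lam * (q (σ i) / lam) = q (σ i) := by field_simp
    nlinarith [h4, h5]
  -- tangent inequality per coordinate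
  have tangent : ∀ i : Fin K,
      p i * q i - lam * (p i * Real.log ((K : ℝ) * p i)) ≤
        P astar i * q i - lam * (P astar i * Real.log ((K : ℝ) * P astar i)) +
          (q i - lam * (Real.log ((K : ℝ) * P astar i) + 1)) * (p i - P astar i) :=
    fun i => tangent_ineq (K:ℝ) lam (q i) (P astar i) (p i) hKr hlam (hpos i) (hp0 i)
  have hlin : ∑ i : Fin K,
      (q i - lam * (Real.log ((K : ℝ) * P astar i) + 1)) * (p i - P astar i) ≤ 0 := by
    rw [← Equiv.sum_comp σ
      (fun i => (q i - lam * (Real.log ((K : ℝ) * P astar i) + 1)) * (p i - P astar i))]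
    have hterm : ∀ i : Fin K,
        (q (σ i) - lam * (Real.log ((K : ℝ) * P astar (σ i)) + 1)) *
            (p (σ i) - P astar (σ i)) ≤ c * (p (σ i) - P astar (σ i)) := by
      intro i
      rcases lt_or_ge (i : ℕ) A with hi | hi
      · have hgge := hg_ge i hi
        have hΔ : p (σ i) - P astar (σ i) ≤ 0 := by
          have h := hPa i
          rw [h, if_pos hi]
          linarith [hpcap (σ i)]
        exact mul_le_mul_of_nonpos_right hgge hΔ
      · rw [hg_eq i hi]
    calc (∑ i : Fin K, (q (σ i) - lam * (Real.log ((K : ℝ) * P astar (σ i)) + 1)) *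
            (p (σ i) - P astar (σ i)))
        ≤ ∑ i : Fin K, c * (p (σ i) - P astar (σ i)) :=
          Finset.sum_le_sum (fun i _ => hterm i)
      _ = c * ((∑ i : Fin K, p i) - ∑ i : Fin K, P astar i) := by
          rw [← Finset.mul_sum, Finset.sum_sub_distrib,
            Equiv.sum_comp σ p, Equiv.sum_comp σ (P astar)]
      _ ≤ 0 := by
          rcases min_cases (1 / (K : ℝ)) ((1 - (A:ℝ)/k) / Ss q lam σ A) with
            ⟨hmin, _⟩ | ⟨hmin, _⟩
          · have hM1K : Mm k q lam σ A = 1 / (K:ℝ) := hmin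
            have : (K:ℝ) * Mm k q lam σ A = 1 := by
              rw [hM1K]; field_simp
            rw [hc, this, Real.log_one]
            simp
          · have hMr : Mm k q lam σ A = (1 - (A:ℝ)/k) / Ss q lam σ A := hmin
            have hMS' : Mm k q lam σ A * Ss q lam σ A = 1 - (A:ℝ)/k := by
              rw [hMr, div_mul_cancel₀ _ (hS_pos A le_rfl).ne']
            have hsum1 : ∑ i : Fin K, P astar i = 1 := by
              rw [hsum_eq, hMS']; ring
            rw [hsum1]
            apply mul_nonpos_of_nonneg_of_nonpos hc_nonneg
            linarith
  -- combine
  have lhs_eq : (∑ i : Fin K, p i * q i) -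
      lam * ∑ i : Fin K, p i * Real.log ((K : ℝ) * p i) =
      ∑ i : Fin K, (p i * q i - lam * (p i * Real.log ((K : ℝ) * p i))) := by
    rw [Finset.mul_sum, ← Finset.sum_sub_distrib]
  have rhs_eq : (∑ i : Fin K, P astar i * q i) -
      lam * ∑ i : Fin K, P astar i * Real.log ((K : ℝ) * P astar i) =
      ∑ i : Fin K, (P astar i * q i -
        lam * (P astar i * Real.log ((K : ℝ) * P astar i))) := by
    rw [Finset.mul_sum, ← Finset.sum_sub_distrib]
  rw [lhs_eq, rhs_eq]
  calc ∑ i : Fin K, (p i * q i - lam * (p i * Real.log ((K : ℝ) * p i)))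
      ≤ ∑ i : Fin K, (P astar i * q i -
          lam * (P astar i * Real.log ((K : ℝ) * P astar i)) +
          (q i - lam * (Real.log ((K : ℝ) * P astar i) + 1)) * (p i - P astar i)) :=
        Finset.sum_le_sum (fun i _ => tangent i)
    _ = (∑ i : Fin K, (P astar i * q i -
          lam * (P astar i * Real.log ((K : ℝ) * P astar i)))) +
        ∑ i : Fin K, (q i - lam * (Real.log ((K : ℝ) * P astar i) + 1)) *
          (p i - P astar i) := Finset.sum_add_distrib
    _ ≤ ∑ i : Fin K, (P astar i * q i -
          lam * (P astar i * Real.log ((K : ℝ) * P astar i))) := by linarith
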